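/- For all complex a, b with b not a nonpositive integer, and all complex z, Kummer's confluent hypergeometric function satisfies the Kummer transformation ₁F₁(a,b,z) = e^z · ₁F₁(b−a, b, −z). -/

import Mathlib

open Finset

section aux

open Polynomial Filter

private lemma kummer_desc_smeval (x : ℂ) (k : ℕ) :
    (descPochhammer ℤ k).smeval x = ∏ i ∈ Finset.range k, (x - i) := by
  induction k with
  | zero => simp
  | succ n ih =>
    rw [descPochhammer_succ_right, smeval_mul, ih, prod_range_succ, smeval_sub, smeval_X,
      smeval_natCast, pow_one, pow_zero]
    ring

private lemma kummer_refl2 (c : ℂ) (k j : ℕ) :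
    ∏ i ∈ range j, (c + (↑(k + j) : ℂ) - 1 - i) = ∏ i ∈ range j, (c + (↑(k + i) : ℂ)) := by
  rw [← prod_range_reflect fun i => c + (↑(k + i) : ℂ)]
  refine prod_congr rfl fun i hi => ?_
  rw [mem_range] at hi
  have h1 : k + (j - 1 - i) = k + j - (i + 1) := by omega
  rw [h1, Nat.cast_sub (by omega)]
  push_cast; ring

private lemma kummer_negprod (y : ℂ) (k : ℕ) :
    ∏ i ∈ range k, (-y - (i : ℂ)) = (-1) ^ k * ∏ i ∈ range k, (y + i) := by
  calc ∏ i ∈ range k, (-y - (i : ℂ)) = ∏ i ∈ range k, ((-1) * (y + i)) :=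
        prod_congr rfl fun i _ => by ring
    _ = (-1) ^ k * ∏ i ∈ range k, (y + i) := by
        rw [prod_mul_distrib, prod_const, card_range]

private lemma kummer_vand (a b : ℂ) (n : ℕ) :
    ∏ i ∈ Finset.range n, (a + i) =
      ∑ k ∈ Finset.range (n + 1), (n.choose k : ℂ) *
        ((-1) ^ k * ∏ i ∈ Finset.range k, (b - a + i)) *
        ∏ i ∈ Finset.range (n - k), (b + (↑(k + i) : ℂ)) := by
  have H := Ring.descPochhammer_smeval_add (R := ℂ) (r := a - b) (s := b + n - 1) n
    (Commute.all _ _)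
  rw [Finset.Nat.sum_antidiagonal_eq_sum_range_succ_mk] at H
  simp only [kummer_desc_smeval] at H
  have h1 : ∏ i ∈ range n, (a - b + (b + ↑n - 1) - ↑i) = ∏ i ∈ range n, (a + i) := by
    have := kummer_refl2 a 0 n
    simp only [Nat.zero_add, zero_add, Nat.cast_add] at this ⊢
    rw [← this]
    exact prod_congr rfl fun i _ => by ring
  rw [h1] at H
  rw [H]
  refine sum_congr rfl fun k hk => ?_
  rw [mem_range] at hk
  have h2 : ∏ i ∈ range (n - k), (b + ↑n - 1 - (i : ℂ)) =
      ∏ i ∈ range (n - k), (b + (↑(k + i) : ℂ)) := by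
    have := kummer_refl2 b k (n - k)
    rwa [Nat.add_sub_cancel' (by omega)] at this
  have h3 : ∏ i ∈ range k, (a - b - (i : ℂ)) = (-1) ^ k * ∏ i ∈ range k, (b - a + i) := by
    have := kummer_negprod (b - a) k
    simpa using this
  rw [h2, h3]
  ring

private lemma kummer_coeff_id (a b : ℂ) (hb : ∀ k : ℕ, b ≠ -(k : ℂ)) (n : ℕ) :
    ∑ k ∈ range (n + 1),
      (-1) ^ k * (∏ i ∈ range k, (b - a + i)) /
        ((∏ i ∈ range k, (b + i)) * (k.factorial : ℂ) * ((n - k).factorial : ℂ)) =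
      (∏ i ∈ range n, (a + i)) / ((∏ i ∈ range n, (b + i)) * (n.factorial : ℂ)) := by
  have hfac : ∀ m : ℕ, (m.factorial : ℂ) ≠ 0 := fun m => Nat.cast_ne_zero.mpr m.factorial_ne_zero
  have hPb : ∀ m : ℕ, (∏ i ∈ range m, (b + (i : ℂ))) ≠ 0 := fun m =>
    prod_ne_zero_iff.mpr fun i _ h => hb i (eq_neg_of_add_eq_zero_left h)
  rw [kummer_vand a b n, sum_div]
  refine sum_congr rfl fun k hk => ?_
  rw [mem_range, Nat.lt_succ_iff] at hk
  have hsplit : (∏ i ∈ range n, (b + (i : ℂ))) =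
      (∏ i ∈ range k, (b + (i : ℂ))) * ∏ i ∈ range (n - k), (b + (↑(k + i) : ℂ)) := by
    rw [← prod_range_add (fun i => b + (i : ℂ)) k (n - k), Nat.add_sub_cancel' hk]
  have hQ : (∏ i ∈ range (n - k), (b + (↑(k + i) : ℂ))) ≠ 0 := by
    intro h
    exact hPb n (by rw [hsplit, h, mul_zero])
  have hfact : ((n.factorial : ℕ) : ℂ) =
      (n.choose k : ℂ) * (k.factorial : ℂ) * ((n - k).factorial : ℂ) := by
    exact_mod_cast (congrArg (Nat.cast : ℕ → ℂ)
      (Nat.choose_mul_factorial_mul_factorial hk)).symm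
  have hch : (n.choose k : ℂ) ≠ 0 := Nat.cast_ne_zero.mpr (Nat.choose_pos hk).ne'
  rw [hsplit, hfact]
  field_simp

private lemma kummer_ratio_tendsto (c b z : ℂ) (hb : ∀ k : ℕ, b ≠ -(k : ℂ)) :
    Tendsto (fun n : ℕ => (c + n) * z / ((b + n) * ((n : ℂ) + 1))) atTop (nhds 0) := by
  have t1 : Tendsto (fun n : ℕ => (b + (n : ℂ))⁻¹) atTop (nhds 0) := by
    have hg : Tendsto (fun n : ℕ => ((n : ℝ) - ‖b‖)⁻¹) atTop (nhds 0) :=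
      (tendsto_atTop_add_const_right atTop (-‖b‖) tendsto_natCast_atTop_atTop).inv_tendsto_atTop
    refine squeeze_zero_norm' ?_ hg
    filter_upwards [eventually_ge_atTop (⌈‖b‖⌉₊ + 1)] with n hn
    have h1 : ‖b‖ + 1 ≤ (n : ℝ) := by
      calc ‖b‖ + 1 ≤ (⌈‖b‖⌉₊ : ℝ) + 1 := by linarith [Nat.le_ceil ‖b‖]
      _ ≤ n := by exact_mod_cast hn
    have h2 : (0 : ℝ) < (n : ℝ) - ‖b‖ := by linarith
    have h3 : (n : ℝ) - ‖b‖ ≤ ‖b + (n : ℂ)‖ := by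
      have h4 : ‖(n : ℂ)‖ ≤ ‖b + (n : ℂ)‖ + ‖b‖ := by
        calc ‖(n : ℂ)‖ = ‖(b + (n : ℂ)) - b‖ := by ring_nf
          _ ≤ ‖b + (n : ℂ)‖ + ‖b‖ := norm_sub_le _ _
      rw [Complex.norm_natCast] at h4
      linarith
    rw [norm_inv]
    exact inv_anti₀ h2 h3
  have t2 : Tendsto (fun n : ℕ => ((n : ℂ) + 1)⁻¹) atTop (nhds 0) := by
    have t2' := (Complex.continuous_ofReal.tendsto 0).comp tendsto_one_div_add_atTop_nhds_zero_nat
    simp only [Function.comp_def, Complex.ofReal_zero] at t2'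
    refine t2'.congr fun n => ?_
    push_cast
    ring
  have key : Tendsto (fun n : ℕ => (1 - (b - c) * (b + n)⁻¹) * (z * ((n : ℂ) + 1)⁻¹))
      atTop (nhds 0) := by
    have := ((tendsto_const_nhds (x := (1 : ℂ))).sub
      ((tendsto_const_nhds (x := b - c)).mul t1)).mul ((tendsto_const_nhds (x := z)).mul t2)
    simpa using this
  refine key.congr fun n => ?_
  have hbn : (b + (n : ℂ)) ≠ 0 := fun h => hb n (eq_neg_of_add_eq_zero_left h)
  have hn1 : ((n : ℂ) + 1) ≠ 0 := Nat.cast_add_one_ne_zero n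
  rw [eq_div_iff (mul_ne_zero hbn hn1)]
  field_simp [hbn]
  ring

private lemma kummer_summable_norm (c b z : ℂ) (hb : ∀ k : ℕ, b ≠ -(k : ℂ)) :
    Summable fun n : ℕ =>
      ‖((∏ i ∈ Finset.range n, (c + (i : ℂ))) /
        ((∏ i ∈ Finset.range n, (b + (i : ℂ))) * (n.factorial : ℂ))) * z ^ n‖ := by
  set f : ℕ → ℂ := fun n =>
    ((∏ i ∈ Finset.range n, (c + (i : ℂ))) /
      ((∏ i ∈ Finset.range n, (b + (i : ℂ))) * (n.factorial : ℂ))) * z ^ n with hf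
  have hfac : ∀ m : ℕ, (m.factorial : ℂ) ≠ 0 := fun m => Nat.cast_ne_zero.mpr m.factorial_ne_zero
  have hbn : ∀ n : ℕ, (b + (n : ℂ)) ≠ 0 := fun n h => hb n (eq_neg_of_add_eq_zero_left h)
  have hPb : ∀ m : ℕ, (∏ i ∈ range m, (b + (i : ℂ))) ≠ 0 := fun m =>
    prod_ne_zero_iff.mpr fun i _ h => hb i (eq_neg_of_add_eq_zero_left h)
  have hstep : ∀ n : ℕ, f (n + 1) = f n * ((c + n) * z / ((b + n) * ((n : ℂ) + 1))) := by
    intro n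
    rw [hf]
    simp only
    rw [prod_range_succ, prod_range_succ, pow_succ, Nat.factorial_succ]
    push_cast
    have hn1 : ((n : ℂ) + 1) ≠ 0 := Nat.cast_add_one_ne_zero n
    field_simp
  have hq : Tendsto (fun n : ℕ => ‖(c + n) * z / ((b + n) * ((n : ℂ) + 1))‖) atTop (nhds 0) := by
    have := (kummer_ratio_tendsto c b z hb).norm
    simpa using this
  have hev : ∀ᶠ n : ℕ in atTop, ‖(c + (n : ℂ)) * z / ((b + n) * ((n : ℂ) + 1))‖ ≤ 1 / 2 := by
    filter_upwards [hq.eventually_le_const (by norm_num : (0 : ℝ) < 1 / 2)] with n hn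
    exact hn
  have hratio : ∀ᶠ n : ℕ in atTop, ‖(fun n => ‖f n‖) (n + 1)‖ ≤ (1 / 2) * ‖(fun n => ‖f n‖) n‖ := by
    filter_upwards [hev] with n hn
    simp only [norm_norm]
    rw [hstep n, norm_mul]
    calc ‖f n‖ * ‖(c + n) * z / ((b + n) * ((n : ℂ) + 1))‖ ≤ ‖f n‖ * (1 / 2) :=
          mul_le_mul_of_nonneg_left hn (norm_nonneg _)
      _ = 1 / 2 * ‖f n‖ := by ring
  exact summable_of_ratio_norm_eventually_le (by norm_num) hratio

private lemma kummer_cauchy_term (a b z : ℂ) (hb : ∀ k : ℕ, b ≠ -(k : ℂ)) (n : ℕ) :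
    ∑ k ∈ range (n + 1), (z ^ k / (k.factorial : ℂ)) *
      (((∏ i ∈ range (n - k), (b - a + i)) /
        ((∏ i ∈ range (n - k), (b + i)) * ((n - k).factorial : ℂ))) * (-z) ^ (n - k)) =
      ((∏ i ∈ range n, (a + i)) /
        ((∏ i ∈ range n, (b + i)) * (n.factorial : ℂ))) * z ^ n := by
  set F : ℕ → ℂ := fun j => (-1) ^ j * (∏ i ∈ range j, (b - a + i)) /
    ((∏ i ∈ range j, (b + i)) * (j.factorial : ℂ) * ((n - j).factorial : ℂ)) with hF
  have hrefl : ∑ k ∈ range (n + 1), F (n - k) = ∑ k ∈ range (n + 1), F k := by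
    have := Finset.sum_range_reflect F (n + 1)
    simpa using this
  calc ∑ k ∈ range (n + 1), (z ^ k / (k.factorial : ℂ)) *
        (((∏ i ∈ range (n - k), (b - a + i)) /
          ((∏ i ∈ range (n - k), (b + i)) * ((n - k).factorial : ℂ))) * (-z) ^ (n - k)) =
      ∑ k ∈ range (n + 1), F (n - k) * z ^ n := by
        refine sum_congr rfl fun k hk => ?_
        rw [mem_range, Nat.lt_succ_iff] at hk
        rw [hF]
        simp only
        rw [Nat.sub_sub_self hk]
        have hzz : z ^ k * (-z) ^ (n - k) = (-1) ^ (n - k) * z ^ n := by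
          rw [neg_pow, ← mul_assoc, mul_comm (z ^ k), mul_assoc, ← pow_add,
            Nat.add_sub_cancel' hk]
        calc (z ^ k / (k.factorial : ℂ)) *
            (((∏ i ∈ range (n - k), (b - a + i)) /
              ((∏ i ∈ range (n - k), (b + i)) * ((n - k).factorial : ℂ))) * (-z) ^ (n - k)) =
            (∏ i ∈ range (n - k), (b - a + i)) * (z ^ k * (-z) ^ (n - k)) /
              ((∏ i ∈ range (n - k), (b + i)) * ((n - k).factorial : ℂ) * (k.factorial : ℂ)) := by
              ring
          _ = (∏ i ∈ range (n - k), (b - a + i)) * ((-1) ^ (n - k) * z ^ n) /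
              ((∏ i ∈ range (n - k), (b + i)) * ((n - k).factorial : ℂ) * (k.factorial : ℂ)) := by
              rw [hzz]
          _ = (-1) ^ (n - k) * (∏ i ∈ range (n - k), (b - a + i)) /
              ((∏ i ∈ range (n - k), (b + i)) * ((n - k).factorial : ℂ) * (k.factorial : ℂ)) *
                z ^ n := by ring
      _ = (∑ k ∈ range (n + 1), F k) * z ^ n := by rw [← sum_mul, hrefl]
      _ = ((∏ i ∈ range n, (a + i)) /
          ((∏ i ∈ range n, (b + i)) * (n.factorial : ℂ))) * z ^ n := by
          rw [hF]
          simp only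
          rw [kummer_coeff_id a b hb n]

end aux

/-- Kummer's confluent hypergeometric function of the first kind,
defined by its everywhere-convergent power series. -/
noncomputable def kummerM (a b z : ℂ) : ℂ :=
  ∑' n : ℕ, ((∏ i ∈ Finset.range n, (a + (i : ℂ))) /
      ((∏ i ∈ Finset.range n, (b + (i : ℂ))) * (n.factorial : ℂ))) * z ^ n

/-- Kummer transformation: ₁F₁(a,b,z) = e^z · ₁F₁(b−a,b,−z) for b not a nonpositive integer. -/
theorem kummer_transformation (a b z : ℂ) (hb : ∀ k : ℕ, b ≠ -(k : ℂ)) :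
    kummerM a b z = Complex.exp z * kummerM (b - a) b (-z) := by
  rw [kummerM, kummerM, Complex.exp_eq_exp_ℂ, NormedSpace.exp_eq_tsum_div]
  have hg : Summable fun n : ℕ => ‖z ^ n / (n.factorial : ℂ)‖ :=
    NormedSpace.norm_expSeries_div_summable z
  have hh : Summable fun n : ℕ =>
      ‖((∏ i ∈ Finset.range n, (b - a + (i : ℂ))) /
        ((∏ i ∈ Finset.range n, (b + (i : ℂ))) * (n.factorial : ℂ))) * (-z) ^ n‖ :=
    kummer_summable_norm (b - a) b (-z) hb
  rw [tsum_mul_tsum_eq_tsum_sum_antidiagonal_of_summable_norm hg hh]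
  refine tsum_congr fun n => ?_
  rw [Finset.Nat.sum_antidiagonal_eq_sum_range_succ_mk]
  exact (kummer_cauchy_term a b z hb n).symm
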